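/- Let 0 < x_1 < x_2 < ⋯ < x_N be real numbers, set x_0 = 0, and let K ∈ ℝ^{N×N} have entries K_{ij} = min(x_i, x_j). Then for every v ∈ ℝ^N, with the convention v_0 = 0, vᵀ K⁻¹ v = Σ_{n=1}^{N} (v_n − v_{n−1})² / (x_n − x_{n−1}). -/

import Mathlib

open Matrix
/-- The Gram matrix of the Brownian motion kernel `k(x,y) = min(x,y)` at points
`x_1 < ⋯ < x_N` (here `x (i+1)` is the `i`-th point, `0`-indexed). -/
noncomputable def gramBM (N : ℕ) (x : ℕ → ℝ) : Matrix (Fin N) (Fin N) ℝ :=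
  Matrix.of fun i j => min (x (i.1 + 1)) (x (j.1 + 1))

private lemma xle {N : ℕ} {x : ℕ → ℝ} (hmono : ∀ n < N, x n < x (n + 1)) :
    ∀ a b : ℕ, a ≤ b → b ≤ N → x a ≤ x b := by
  intro a b hab
  induction hab with
  | refl => intro _; exact le_rfl
  | @step m h ih =>
      intro hm
      exact (ih (by omega)).trans (hmono m (by omega)).le

private lemma sum_shift {N : ℕ} (f : ℕ → ℝ) (h0 : f 0 = 0) :
    ∑ m ∈ Finset.range N, f (m + 1) = ∑ u ∈ Finset.range (N + 1), f u := by
  rw [Finset.sum_range_succ' f N, h0, add_zero]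

private noncomputable def dd (x : ℕ → ℝ) (t : ℕ) : ℝ := x (t + 1) - x t

private noncomputable def bb (N : ℕ) (x : ℕ → ℝ) (j m : ℕ) : ℝ :=
  if m = j then 1 / dd x j else if m = j + 1 ∧ m < N then -(1 / dd x m) else 0

private noncomputable def AA (N : ℕ) (x : ℕ → ℝ) : Matrix (Fin N) (Fin N) ℝ :=
  Matrix.of fun i j : Fin N => bb N x j.1 i.1 - bb N x j.1 (i.1 + 1)

private lemma KA (N : ℕ) (x : ℕ → ℝ) (hx0 : x 0 = 0)
    (hmono : ∀ n < N, x n < x (n + 1)) : gramBM N x * AA N x = 1 := by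
  have hxle := xle hmono
  have hdpos : ∀ t, t < N → (0:ℝ) < dd x t := fun t ht => sub_pos.mpr (hmono t ht)
  ext i j
  have hi : i.1 < N := i.2
  have hj : j.1 < N := j.2
  rw [Matrix.mul_apply, Matrix.one_apply]
  have hsum : ∀ m : Fin N, gramBM N x i m * AA N x m j
      = (fun m : ℕ => min (x (i.1+1)) (x (m+1)) * bb N x j.1 m
          - min (x (i.1+1)) (x (m+1)) * bb N x j.1 (m+1)) m.1 := by
    intro m
    simp only [gramBM, AA, Matrix.of_apply, mul_sub]
  rw [Finset.sum_congr rfl (fun m _ => hsum m),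
      Fin.sum_univ_eq_sum_range (fun m : ℕ => min (x (i.1+1)) (x (m+1)) * bb N x j.1 m
          - min (x (i.1+1)) (x (m+1)) * bb N x j.1 (m+1)) N,
      Finset.sum_sub_distrib]
  have hS1 : ∑ m ∈ Finset.range N, min (x (i.1+1)) (x (m+1)) * bb N x j.1 m
      = min (x (i.1+1)) (x (j.1+1)) * (1 / dd x j.1)
        + (if j.1+1 < N then -(min (x (i.1+1)) (x (j.1+2)) * (1 / dd x (j.1+1))) else 0) := by
    have hpt : ∀ m ∈ Finset.range N,
        min (x (i.1+1)) (x (m+1)) * bb N x j.1 m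
        = (if m = j.1 then min (x (i.1+1)) (x (j.1+1)) * (1 / dd x j.1) else 0)
          + (if m = j.1+1 then -(min (x (i.1+1)) (x (j.1+2)) * (1 / dd x (j.1+1))) else 0) := by
      intro m hm
      rw [Finset.mem_range] at hm
      rcases eq_or_ne m j.1 with h | h
      · subst h
        rw [if_pos rfl, if_neg (by omega), bb, if_pos rfl, add_zero]
      · rcases eq_or_ne m (j.1+1) with h2 | h2
        · subst h2
          rw [if_neg h, if_pos rfl, bb, if_neg h, if_pos ⟨rfl, hm⟩, zero_add]
          ring
        · rw [if_neg h, if_neg h2, bb, if_neg h, if_neg (by omega), mul_zero, add_zero]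
    rw [Finset.sum_congr rfl hpt, Finset.sum_add_distrib,
        Finset.sum_ite_eq' (Finset.range N) j.1,
        Finset.sum_ite_eq' (Finset.range N) (j.1+1)]
    simp [Finset.mem_range, hj]
  have hS2 : ∑ m ∈ Finset.range N, min (x (i.1+1)) (x (m+1)) * bb N x j.1 (m+1)
      = min (x (i.1+1)) (x j.1) * (1 / dd x j.1)
        + (if j.1+1 < N then -(min (x (i.1+1)) (x (j.1+1)) * (1 / dd x (j.1+1))) else 0) := by
    have h0 : min (x (i.1+1)) (x 0) * bb N x j.1 0 = 0 := by
      rw [hx0, min_eq_right (by rw [← hx0]; exact hxle 0 (i.1+1) (by omega) (by omega)),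
        zero_mul]
    have hsh : ∑ m ∈ Finset.range N, min (x (i.1+1)) (x (m+1)) * bb N x j.1 (m+1)
        = ∑ u ∈ Finset.range (N+1), min (x (i.1+1)) (x u) * bb N x j.1 u :=
      sum_shift (fun u : ℕ => min (x (i.1+1)) (x u) * bb N x j.1 u) h0
    rw [hsh]
    have hpt2 : ∀ u ∈ Finset.range (N+1),
        min (x (i.1+1)) (x u) * bb N x j.1 u
        = (if u = j.1 then min (x (i.1+1)) (x j.1) * (1 / dd x j.1) else 0)
          + (if u = j.1+1 then
              (if j.1+1 < N then -(min (x (i.1+1)) (x (j.1+1)) * (1 / dd x (j.1+1))) else 0)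
            else 0) := by
      intro u _
      rcases eq_or_ne u j.1 with h | h
      · subst h
        rw [if_pos rfl, if_neg (by omega), bb, if_pos rfl, add_zero]
      · rcases eq_or_ne u (j.1+1) with h2 | h2
        · subst h2
          rw [if_neg h, if_pos rfl, bb, if_neg h, zero_add]
          by_cases hP : j.1 + 1 < N
          · rw [if_pos ⟨rfl, hP⟩, if_pos hP]; ring
          · rw [if_neg (fun hc => hP hc.2), if_neg hP, mul_zero]
        · rw [if_neg h, if_neg h2, bb, if_neg h, if_neg (by omega), mul_zero, add_zero]
    rw [Finset.sum_congr rfl hpt2, Finset.sum_add_distrib,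
        Finset.sum_ite_eq' (Finset.range (N+1)) j.1,
        Finset.sum_ite_eq' (Finset.range (N+1)) (j.1+1)]
    simp [Finset.mem_range, Nat.lt_succ_of_lt hj, hj]
  rw [hS1, hS2]
  have hne1 : x (j.1+1) - x j.1 ≠ 0 := sub_ne_zero.mpr (hmono j.1 hj).ne'
  rcases lt_trichotomy i.1 j.1 with h | h | h
  · have hne : i ≠ j := fun e => absurd (congrArg Fin.val e) (by omega)
    have e1 : min (x (i.1+1)) (x (j.1+1)) = x (i.1+1) :=
      min_eq_left (hxle _ _ (by omega) (by omega))
    have e2 : min (x (i.1+1)) (x j.1) = x (i.1+1) :=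
      min_eq_left (hxle _ _ (by omega) (by omega))
    rw [e1, e2, if_neg hne]
    by_cases hP : j.1 + 1 < N
    · have e3 : min (x (i.1+1)) (x (j.1+2)) = x (i.1+1) :=
        min_eq_left (hxle _ _ (by omega) (by omega))
      rw [if_pos hP, if_pos hP, e3]; ring
    · rw [if_neg hP, if_neg hP]; ring
  · have hij : i = j := Fin.ext h
    subst hij
    have e1 : min (x (i.1+1)) (x (i.1+1)) = x (i.1+1) := min_self _
    have e2 : min (x (i.1+1)) (x i.1) = x i.1 :=
      min_eq_right (hxle _ _ (by omega) (by omega))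
    rw [e1, e2, if_pos rfl]
    by_cases hP : i.1 + 1 < N
    · have e3 : min (x (i.1+1)) (x (i.1+2)) = x (i.1+1) :=
        min_eq_left (hxle _ _ (by omega) (by omega))
      rw [if_pos hP, if_pos hP, e3]
      simp only [dd]
      field_simp
      ring
    · rw [if_neg hP, if_neg hP]
      simp only [dd]
      field_simp
      ring
  · have hne : i ≠ j := fun e => absurd (congrArg Fin.val e) (by omega)
    have hP : j.1 + 1 < N := by omega
    have hne2 : x (j.1+2) - x (j.1+1) ≠ 0 := sub_ne_zero.mpr (hmono (j.1+1) hP).ne'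
    have e1 : min (x (i.1+1)) (x (j.1+1)) = x (j.1+1) :=
      min_eq_right (hxle _ _ (by omega) (by omega))
    have e2 : min (x (i.1+1)) (x j.1) = x j.1 :=
      min_eq_right (hxle _ _ (by omega) (by omega))
    have e3 : min (x (i.1+1)) (x (j.1+2)) = x (j.1+2) :=
      min_eq_right (hxle _ _ (by omega) (by omega))
    rw [e1, e2, e3, if_pos hP, if_pos hP, if_neg hne]
    simp only [dd]
    field_simp
    ring

private lemma mulVec_AA (N : ℕ) (x : ℕ → ℝ) (v : ℕ → ℝ) (hv0 : v 0 = 0) (i : Fin N) :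
    (AA N x).mulVec (fun k : Fin N => v (k.1 + 1)) i
      = (v (i.1+1) - v i.1) * (1 / dd x i.1)
        - (if i.1+1 < N then (v (i.1+2) - v (i.1+1)) * (1 / dd x (i.1+1)) else 0) := by
  have hi : i.1 < N := i.2
  rw [Matrix.mulVec, dotProduct]
  have hsum : ∀ k : Fin N, AA N x i k * v (k.1 + 1)
      = (fun k : ℕ => (bb N x k i.1 - bb N x k (i.1+1)) * v (k+1)) k.1 := by
    intro k; simp only [AA, Matrix.of_apply]
  rw [Finset.sum_congr rfl (fun k _ => hsum k),
      Fin.sum_univ_eq_sum_range (fun k : ℕ => (bb N x k i.1 - bb N x k (i.1+1)) * v (k+1)) N]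
  have hsplit : ∀ k ∈ Finset.range N, (bb N x k i.1 - bb N x k (i.1+1)) * v (k+1)
      = bb N x k i.1 * v (k+1) - bb N x k (i.1+1) * v (k+1) := fun k _ => by ring
  rw [Finset.sum_congr rfl hsplit, Finset.sum_sub_distrib]
  have hT1 : ∑ k ∈ Finset.range N, bb N x k i.1 * v (k+1)
      = (1 / dd x i.1) * v (i.1+1) - (1 / dd x i.1) * v i.1 := by
    have hpt : ∀ k ∈ Finset.range N, bb N x k i.1 * v (k+1)
        = (if k = i.1 then (1 / dd x i.1) * v (i.1+1) else 0)
          + (if k = i.1 - 1 then (if 1 ≤ i.1 then -((1 / dd x i.1) * v i.1) else 0) else 0) := by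
      intro k hk
      rw [Finset.mem_range] at hk
      rcases eq_or_ne k i.1 with h | h
      · subst h
        rw [if_pos rfl, bb, if_pos rfl]
        rcases Nat.eq_zero_or_pos i.1 with h0 | h0
        · rw [if_pos (by omega), if_neg (by omega), add_zero]
        · rw [if_neg (by omega), add_zero]
      · rcases eq_or_ne k (i.1 - 1) with h2 | h2
        · have h1i : 1 ≤ i.1 := by omega
          subst h2
          rw [if_neg h, if_pos rfl, if_pos h1i, bb, if_neg (by omega),
            if_pos ⟨by omega, hi⟩, zero_add]
          have : i.1 - 1 + 1 = i.1 := by omega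
          rw [this]; ring
        · rw [if_neg h, if_neg h2, bb, if_neg (by omega), if_neg (by omega),
            zero_mul, add_zero]
    rw [Finset.sum_congr rfl hpt, Finset.sum_add_distrib,
        Finset.sum_ite_eq' (Finset.range N) i.1,
        Finset.sum_ite_eq' (Finset.range N) (i.1 - 1)]
    rw [if_pos (Finset.mem_range.mpr hi), if_pos (Finset.mem_range.mpr (by omega))]
    rcases Nat.eq_zero_or_pos i.1 with h0 | h0
    · rw [if_neg (by omega), h0, hv0]; ring
    · rw [if_pos (show (1:ℕ) ≤ i.1 by omega)]; ring
  have hT2 : ∑ k ∈ Finset.range N, bb N x k (i.1+1) * v (k+1)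
      = (if i.1+1 < N then (1 / dd x (i.1+1)) * v (i.1+2)
          - (1 / dd x (i.1+1)) * v (i.1+1) else 0) := by
    have hpt : ∀ k ∈ Finset.range N, bb N x k (i.1+1) * v (k+1)
        = (if k = i.1+1 then (1 / dd x (i.1+1)) * v (i.1+2) else 0)
          + (if k = i.1 then (if i.1+1 < N then -((1 / dd x (i.1+1)) * v (i.1+1)) else 0)
            else 0) := by
      intro k hk
      rw [Finset.mem_range] at hk
      rcases eq_or_ne k (i.1+1) with h | h
      · subst h
        rw [if_pos rfl, if_neg (by omega), bb, if_pos rfl, add_zero]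
      · rcases eq_or_ne k i.1 with h2 | h2
        · subst h2
          rw [if_neg h, if_pos rfl, bb, if_neg (by omega), zero_add]
          by_cases hP : i.1 + 1 < N
          · rw [if_pos ⟨rfl, hP⟩, if_pos hP]; ring
          · rw [if_neg (fun hc => hP hc.2), if_neg hP, zero_mul]
        · rw [if_neg h, if_neg h2, bb, if_neg (by omega), if_neg (by omega),
            zero_mul, add_zero]
    rw [Finset.sum_congr rfl hpt, Finset.sum_add_distrib,
        Finset.sum_ite_eq' (Finset.range N) (i.1+1),
        Finset.sum_ite_eq' (Finset.range N) i.1,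
        if_pos (Finset.mem_range.mpr hi)]
    simp only [Finset.mem_range]
    by_cases hP : i.1 + 1 < N
    · rw [if_pos hP, if_pos hP, if_pos hP]; ring
    · rw [if_neg hP, if_neg hP, if_neg hP]; ring
  rw [hT1, hT2]
  by_cases hP : i.1 + 1 < N
  · rw [if_pos hP, if_pos hP]; ring
  · rw [if_neg hP, if_neg hP]; ring

/-- For `0 = x_0 < x_1 < ⋯ < x_N` and any `v ∈ ℝ^N` (here represented by `v : ℕ → ℝ` with the
convention `v 0 = 0`, the data vector being `(v 1, …, v N)`),
`vᵀ K⁻¹ v = Σ_{n=1}^{N} (v_n − v_{n−1})²/(x_n − x_{n−1})`. -/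
theorem quadratic_form_gramBM_inv (N : ℕ) (x : ℕ → ℝ) (hx0 : x 0 = 0)
    (hmono : ∀ n < N, x n < x (n + 1)) (v : ℕ → ℝ) (hv0 : v 0 = 0) :
    (fun i : Fin N => v (i.1 + 1)) ⬝ᵥ
        (gramBM N x)⁻¹.mulVec (fun i : Fin N => v (i.1 + 1)) =
      ∑ n ∈ Finset.range N, (v (n + 1) - v n) ^ 2 / (x (n + 1) - x n) := by
  have hinv : (gramBM N x)⁻¹ = AA N x := Matrix.inv_eq_right_inv (KA N x hx0 hmono)
  rw [hinv, dotProduct]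
  have hpt : ∀ i : Fin N,
      (fun i : Fin N => v (i.1+1)) i * (AA N x).mulVec (fun k : Fin N => v (k.1+1)) i
      = (fun n : ℕ => v (n+1) * ((v (n+1) - v n) * (1 / dd x n)
          - (if n+1 < N then (v (n+2) - v (n+1)) * (1 / dd x (n+1)) else 0))) i.1 := by
    intro i
    rw [mulVec_AA N x v hv0 i]
  rw [Finset.sum_congr rfl (fun i _ => hpt i),
      Fin.sum_univ_eq_sum_range (fun n : ℕ => v (n+1) * ((v (n+1) - v n) * (1 / dd x n)
          - (if n+1 < N then (v (n+2) - v (n+1)) * (1 / dd x (n+1)) else 0))) N]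
  have hsplit : ∀ n ∈ Finset.range N, v (n+1) * ((v (n+1) - v n) * (1 / dd x n)
      - (if n+1 < N then (v (n+2) - v (n+1)) * (1 / dd x (n+1)) else 0))
      = v (n+1) * ((v (n+1) - v n) * (1 / dd x n))
        - (fun u : ℕ => if u < N then v u * ((v (u+1) - v u) * (1 / dd x u)) else 0)
            (n+1) := by
    intro n _
    simp only []
    by_cases hP : n+1 < N
    · rw [if_pos hP, if_pos hP]; ring
    · rw [if_neg hP, if_neg hP]; ring
  rw [Finset.sum_congr rfl hsplit, Finset.sum_sub_distrib,
      sum_shift (fun u : ℕ => if u < N then v u * ((v (u+1) - v u) * (1 / dd x u)) else 0)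
        (by simp [hv0]),
      Finset.sum_range_succ, if_neg (lt_irrefl N), add_zero]
  have hq2 : ∀ u ∈ Finset.range N,
      (if u < N then v u * ((v (u+1) - v u) * (1 / dd x u)) else 0)
        = v u * ((v (u+1) - v u) * (1 / dd x u)) :=
    fun u hu => if_pos (Finset.mem_range.mp hu)
  rw [Finset.sum_congr rfl hq2, ← Finset.sum_sub_distrib]
  refine Finset.sum_congr rfl (fun n _ => ?_)
  simp only [dd]
  ring
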